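/- Let r ≥ 3 be an integer and p = (r+2)/(r-2). Let G(z) = z^2, Q = (-2p(p+1)/(z(z-1)^2(z-p)^2)) dz^2, and let g be a primitive of dg = z(z-p)^{r-2}/(z-1)^{r+2} dz (the residue of the right-hand side at z = 1 vanishes, so g is a well-defined meromorphic function on ℂ ∪ {∞}). Then S(g) - S(G) = 2Q, where S denotes the Schwarzian derivative. -/

import Mathlib

/-- The Schwarzian derivative S(f) = (f''/f')' - (1/2)(f''/f')². -/
noncomputable def schwarzian (f : ℂ → ℂ) (z : ℂ) : ℂ :=
  deriv (fun w => deriv (deriv f) w / deriv f w) z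
    - (1 / 2) * (deriv (deriv f) z / deriv f z) ^ 2

set_option maxHeartbeats 2000000 in
lemma alg_aux (p z : ℂ) (hz0 : z ≠ 0) (hz1 : z - 1 ≠ 0) (hzp : z - p ≠ 0) (hp1 : p - 1 ≠ 0) :
    (-(1 / z ^ 2) + 4 / (p - 1) * -(1 / (z - p) ^ 2) - 4 * p / (p - 1) * -(1 / (z - 1) ^ 2)
        - 1 / 2 * (1 / z + (4 / (p - 1)) / (z - p) - (4 * p / (p - 1)) / (z - 1)) ^ 2)
      - (-(1 / z ^ 2) - 1 / 2 * z⁻¹ ^ 2)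
      = 2 * (-2 * p * (p + 1) / (z * (z - 1) ^ 2 * (z - p) ^ 2)) := by
  set K : ℂ := z * (z - p) * (z - 1) * (p - 1) with hK
  have hKne : K ≠ 0 := by
    rw [hK]; exact mul_ne_zero (mul_ne_zero (mul_ne_zero hz0 hzp) hz1) hp1
  set D : ℂ := 2 * K ^ 2 with hD
  have hDne : D ≠ 0 := by
    rw [hD]; exact mul_ne_zero two_ne_zero (pow_ne_zero _ hKne)
  have e1 : -(1 / z ^ 2) = (-(2 * ((z - p) * (z - 1) * (p - 1)) ^ 2)) / D := by
    rw [eq_div_iff hDne, hD, hK]; field_simp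
  have e2 : 4 / (p - 1) * -(1 / (z - p) ^ 2) = (-(8 * (p - 1) * (z * (z - 1)) ^ 2)) / D := by
    rw [eq_div_iff hDne, hD, hK]; field_simp; ring
  have e3 : 4 * p / (p - 1) * -(1 / (z - 1) ^ 2) = (-(8 * p * (p - 1) * (z * (z - p)) ^ 2)) / D := by
    rw [eq_div_iff hDne, hD, hK]; field_simp; ring
  have hsq : (1 / z + (4 / (p - 1)) / (z - p) - (4 * p / (p - 1)) / (z - 1))
      = ((z - p) * (z - 1) * (p - 1) + 4 * z * (z - 1) - 4 * p * z * (z - p)) / K := by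
    rw [eq_div_iff hKne, hK]; field_simp
  have e4 : 1 / 2 * (1 / z + (4 / (p - 1)) / (z - p) - (4 * p / (p - 1)) / (z - 1)) ^ 2
      = (((z - p) * (z - 1) * (p - 1) + 4 * z * (z - 1) - 4 * p * z * (z - p)) ^ 2) / D := by
    rw [hsq, div_pow, eq_div_iff hDne, hD]
    field_simp
  have e5 : 1 / 2 * (z : ℂ)⁻¹ ^ 2
      = (((z - p) * (z - 1) * (p - 1)) ^ 2) / D := by
    rw [eq_div_iff hDne, hD, hK]; field_simp
  have eR : 2 * (-2 * p * (p + 1) / (z * (z - 1) ^ 2 * (z - p) ^ 2))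
      = (-(8 * p * (p + 1) * z * (p - 1) ^ 2)) / D := by
    rw [eq_div_iff hDne, hD, hK]; field_simp; ring
  rw [e1, e2, e3, e4, e5, eR, ← add_div, ← sub_div, ← sub_div,
    ← sub_div, ← sub_div]
  rw [div_eq_div_iff hDne hDne]
  ring

set_option maxHeartbeats 1000000 in
/-- For an integer r ≥ 3, p = (r+2)/(r-2), G = z²,
Q = -2p(p+1)/(z(z-1)²(z-p)²) dz², and g a primitive of
dg = z(z-p)^{r-2}/(z-1)^{r+2} dz, one has S(g) - S(G) = 2Q. -/
theorem type_O122_H3_schwarzian (r : ℕ) (hr : 3 ≤ r) (p : ℂ)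
    (hp : p = ((r : ℂ) + 2) / ((r : ℂ) - 2))
    (g : ℂ → ℂ)
    (hg : ∀ z : ℂ, z ≠ 1 →
      deriv g z = z * (z - p) ^ (r - 2) / (z - 1) ^ (r + 2)) :
    ∀ z : ℂ, z ≠ 0 → z ≠ 1 → z ≠ p →
      schwarzian g z - schwarzian (fun w => w ^ 2) z
        = 2 * (-2 * p * (p + 1) / (z * (z - 1) ^ 2 * (z - p) ^ 2)) := by
  obtain ⟨k, rfl⟩ : ∃ k, r = 3 + k := le_iff_exists_add.mp hr
  have hm : 3 + k - 2 = k + 1 := by omega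
  have hn : 3 + k + 2 = k + 5 := by omega
  have hk1 : ((k : ℂ) + 1) ≠ 0 := Nat.cast_add_one_ne_zero k
  have hp' : p = ((k : ℂ) + 5) / ((k : ℂ) + 1) := by
    rw [hp]; push_cast; ring_nf
  have hp1 : p - 1 ≠ 0 := by
    rw [hp', div_sub_one hk1]
    intro h
    rw [div_eq_zero_iff] at h
    rcases h with h | h
    · have h4 : (4 : ℂ) = 0 := by linear_combination h
      norm_num at h4
    · exact hk1 h
  have hkval : (k : ℂ) = (5 - p) / (p - 1) := by
    rw [eq_div_iff hp1, hp']
    field_simp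
    ring
  -- key formula for g''/g' on the domain
  have key : ∀ w : ℂ, w ≠ 0 → w ≠ 1 → w ≠ p →
      deriv (deriv g) w / deriv g w
        = 1 / w + ((k : ℂ) + 1) / (w - p) - ((k : ℂ) + 5) / (w - 1) := by
    intro w hw0 hw1 hwp
    have hw1' : w - 1 ≠ 0 := sub_ne_zero.mpr hw1
    have hwp' : w - p ≠ 0 := sub_ne_zero.mpr hwp
    have hev : deriv g =ᶠ[nhds w] fun x => x * (x - p) ^ (k + 1) / (x - 1) ^ (k + 5) := by
      filter_upwards [isOpen_ne.mem_nhds hw1] with x hx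
      rw [hg x hx, hm, hn]
    -- derivative of F
    have hnum : HasDerivAt (fun x : ℂ => x * (x - p) ^ (k + 1))
        (1 * (w - p) ^ (k + 1) + w * (((k : ℂ) + 1) * (w - p) ^ k * 1)) w := by
      have h1 : HasDerivAt (fun x : ℂ => x - p) 1 w := (hasDerivAt_id w).sub_const p
      have h2 := h1.pow (k + 1)
      simp only [Nat.add_sub_cancel] at h2
      have := (hasDerivAt_id w).mul h2
      refine this.congr_deriv ?_
      simp only [Pi.pow_apply, id_eq]
      push_cast
      ring
    have hden : HasDerivAt (fun x : ℂ => (x - 1) ^ (k + 5))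
        (((k : ℂ) + 5) * (w - 1) ^ (k + 4) * 1) w := by
      have h1 : HasDerivAt (fun x : ℂ => x - 1) 1 w := (hasDerivAt_id w).sub_const 1
      have h2 := h1.pow (k + 5)
      rw [show k + 5 - 1 = k + 4 by omega] at h2
      refine h2.congr_deriv ?_
      push_cast
      ring
    have hF : HasDerivAt (fun x : ℂ => x * (x - p) ^ (k + 1) / (x - 1) ^ (k + 5))
        (((1 * (w - p) ^ (k + 1) + w * (((k : ℂ) + 1) * (w - p) ^ k * 1)) * (w - 1) ^ (k + 5)
          - w * (w - p) ^ (k + 1) * (((k : ℂ) + 5) * (w - 1) ^ (k + 4) * 1))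
          / ((w - 1) ^ (k + 5)) ^ 2) w :=
      hnum.div hden (pow_ne_zero _ hw1')
    have hd2 : deriv (deriv g) w = ((1 * (w - p) ^ (k + 1) + w * (((k : ℂ) + 1) * (w - p) ^ k * 1))
          * (w - 1) ^ (k + 5)
          - w * (w - p) ^ (k + 1) * (((k : ℂ) + 5) * (w - 1) ^ (k + 4) * 1))
          / ((w - 1) ^ (k + 5)) ^ 2 := by
      rw [Filter.EventuallyEq.deriv_eq hev]
      exact hF.deriv
    have hd1 : deriv g w = w * (w - p) ^ (k + 1) / (w - 1) ^ (k + 5) := by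
      rw [hg w hw1, hm, hn]
    rw [hd2, hd1]
    rw [div_div_div_eq]
    field_simp
    ring
  -- now compute at z
  intro z hz0 hz1 hzp
  have hz1' : z - 1 ≠ 0 := sub_ne_zero.mpr hz1
  have hzp' : z - p ≠ 0 := sub_ne_zero.mpr hzp
  -- derivative of the logarithmic derivative of g
  have hevH : (fun x => deriv (deriv g) x / deriv g x) =ᶠ[nhds z]
      fun x => 1 / x + ((k : ℂ) + 1) / (x - p) - ((k : ℂ) + 5) / (x - 1) := by
    filter_upwards [isOpen_ne.mem_nhds hz0, isOpen_ne.mem_nhds hz1,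
      isOpen_ne.mem_nhds hzp] with x hx0 hx1 hxp
    exact key x hx0 hx1 hxp
  have hH : HasDerivAt (fun x : ℂ => 1 / x + ((k : ℂ) + 1) / (x - p) - ((k : ℂ) + 5) / (x - 1))
      (-(1 / z ^ 2) + ((k : ℂ) + 1) * (-(1 / (z - p) ^ 2))
        - ((k : ℂ) + 5) * (-(1 / (z - 1) ^ 2))) z := by
    have h1 : HasDerivAt (fun x : ℂ => 1 / x) (-(1 / z ^ 2)) z := by
      simpa [one_div] using hasDerivAt_inv hz0
    have h2 : HasDerivAt (fun x : ℂ => ((k : ℂ) + 1) / (x - p))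
        (((k : ℂ) + 1) * (-(1 / (z - p) ^ 2))) z := by
      have hi : HasDerivAt (fun x : ℂ => (x - p)⁻¹) (-(1 / (z - p) ^ 2)) z := by
        have h0 : HasDerivAt (fun x : ℂ => x - p) 1 z := (hasDerivAt_id z).sub_const p
        have := h0.inv hzp'
        refine this.congr_deriv ?_
        simp [one_div, neg_div]
      simpa [div_eq_mul_inv, mul_comm] using hi.const_mul ((k : ℂ) + 1)
    have h3 : HasDerivAt (fun x : ℂ => ((k : ℂ) + 5) / (x - 1))
        (((k : ℂ) + 5) * (-(1 / (z - 1) ^ 2))) z := by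
      have hi : HasDerivAt (fun x : ℂ => (x - 1)⁻¹) (-(1 / (z - 1) ^ 2)) z := by
        have h0 : HasDerivAt (fun x : ℂ => x - 1) 1 z := (hasDerivAt_id z).sub_const 1
        have := h0.inv hz1'
        refine this.congr_deriv ?_
        simp [one_div, neg_div]
      simpa [div_eq_mul_inv, mul_comm] using hi.const_mul ((k : ℂ) + 5)
    exact (h1.add h2).sub h3
  have hSg : schwarzian g z
      = (-(1 / z ^ 2) + ((k : ℂ) + 1) * (-(1 / (z - p) ^ 2))
          - ((k : ℂ) + 5) * (-(1 / (z - 1) ^ 2)))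
        - (1 / 2) * (1 / z + ((k : ℂ) + 1) / (z - p) - ((k : ℂ) + 5) / (z - 1)) ^ 2 := by
    unfold schwarzian
    rw [Filter.EventuallyEq.deriv_eq hevH, hH.deriv, key z hz0 hz1 hzp]
  -- schwarzian of G = z^2
  have hG1 : deriv (fun w : ℂ => w ^ 2) = fun w => 2 * w := by
    funext w
    simp [deriv_pow]
  have hG2 : deriv (deriv (fun w : ℂ => w ^ 2)) = fun _ => (2 : ℂ) := by
    rw [hG1]
    funext w
    simpa using (((hasDerivAt_id w).const_mul (2 : ℂ))).deriv
  have hGq : (fun w : ℂ => deriv (deriv (fun w : ℂ => w ^ 2)) w / deriv (fun w : ℂ => w ^ 2) w)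
      = fun w => w⁻¹ := by
    funext w
    rw [hG2, hG1]
    rcases eq_or_ne w 0 with h | h
    · simp [h]
    · field_simp
  have hSG : schwarzian (fun w : ℂ => w ^ 2) z = -(1 / z ^ 2) - (1 / 2) * (z⁻¹) ^ 2 := by
    unfold schwarzian
    rw [hGq, hG2, hG1]
    have : deriv (fun w : ℂ => w⁻¹) z = -(1 / z ^ 2) := by
      simpa [one_div] using (hasDerivAt_inv hz0).deriv
    rw [this]
    congr 1
    rcases eq_or_ne z 0 with h | h
    · simp [h]
    · field_simp
  have hK : ((k : ℂ) + 1) = 4 / (p - 1) := by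
    rw [eq_div_iff hp1, hkval]
    field_simp
    norm_num
  have hK5 : ((k : ℂ) + 5) = 4 * p / (p - 1) := by
    rw [eq_div_iff hp1, hkval]
    field_simp
    ring
  rw [hSg, hSG, hK, hK5]
  exact alg_aux p z hz0 hz1' hzp' hp1
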